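/- Let K be the symmetric 5×5 stencil parameterized by w_0,...,w_5 satisfying: w_0 + 4w_1 + 4w_2 + 4w_3 + 8w_4 + 4w_5 = 0, w_1 + 2w_2 + 4w_3 + 10w_4 + 8w_5 = 1, w_2 + 8w_4 + 16w_5 = 0, and (1/12)w_1 + (1/6)w_2 + (4/3)w_3 + (17/6)w_4 + (8/3)w_5 = 0. Then for any C⁶ function u, (1/h²)Σ_{p,q=-2}^{2} K_{pq} u(x+ph, y+qh) = Δu(x,y) + O(h⁴) as h → 0. -/

import Mathlib

set_option maxHeartbeats 2000000
open Asymptotics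

/-- MVT step: if `g 0 = 0` and `deriv g = O(h^n)` then `g = O(h^(n+1))`. -/
lemma step_O {g : ℝ → ℝ} {n : ℕ} (hg : Differentiable ℝ g) (h0 : g 0 = 0)
    (hO : (deriv g) =O[nhds 0] (fun h : ℝ => h ^ n)) :
    g =O[nhds 0] (fun h : ℝ => h ^ (n + 1)) := by
  obtain ⟨C0, hC⟩ := hO.bound
  set C := max C0 0 with hCdef
  have hC0 : 0 ≤ C := le_max_right _ _
  replace hC : ∀ᶠ t in nhds (0:ℝ), ‖deriv g t‖ ≤ C * ‖t ^ n‖ := by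
    filter_upwards [hC] with t ht
    exact ht.trans (mul_le_mul_of_nonneg_right (le_max_left _ _) (norm_nonneg _))
  rw [Metric.eventually_nhds_iff] at hC
  obtain ⟨ε, hε, hball⟩ := hC
  refine IsBigO.of_bound C ?_
  rw [Metric.eventually_nhds_iff]
  refine ⟨ε, hε, fun h hh => ?_⟩
  have key : ‖g h - g 0‖ ≤ (C * |h| ^ n) * ‖h - 0‖ := by
    apply Convex.norm_image_sub_le_of_norm_deriv_le (s := Set.uIcc 0 h)
      (fun t _ => hg t) ?_ (convex_uIcc 0 h) Set.left_mem_uIcc Set.right_mem_uIcc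
    intro t ht
    have h1 : |t| ≤ |h| := by
      rw [Set.uIcc_eq_union] at ht
      rcases ht with ht | ht <;> rw [Set.mem_Icc] at ht <;>
        cases abs_cases h <;> cases abs_cases t <;> nlinarith [ht.1, ht.2]
    have h2 : dist t 0 < ε := by
      simp only [Real.dist_eq, sub_zero]
      calc |t| ≤ |h| := h1
        _ < ε := by simpa [Real.dist_eq] using hh
    calc ‖deriv g t‖ ≤ C * ‖t ^ n‖ := hball h2
      _ ≤ C * |h| ^ n := by
          rw [Real.norm_eq_abs, abs_pow]
          exact mul_le_mul_of_nonneg_left (pow_le_pow_left₀ (abs_nonneg t) h1 n) hC0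
  rw [h0, sub_zero, sub_zero] at key
  calc ‖g h‖ ≤ C * |h| ^ n * ‖h‖ := key
    _ = C * ‖h ^ (n+1)‖ := by
        rw [Real.norm_eq_abs, Real.norm_eq_abs, abs_pow]; ring

/-- If `g` is `C^n` and all derivatives of order `< n` vanish at 0, then `g = O(h^n)`. -/
lemma vanish_O : ∀ (n : ℕ) (g : ℝ → ℝ), ContDiff ℝ n g →
    (∀ k < n, iteratedDeriv k g 0 = 0) → g =O[nhds 0] (fun h : ℝ => h ^ n) := by
  intro n
  induction n with
  | zero =>
      intro g hg _
      simpa using (hg.continuous.continuousAt (x := 0)).isBigO_one ℝ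
  | succ n ih =>
      intro g hg hv
      have hg2 : ContDiff ℝ ((n : WithTop ℕ∞) + 1) g := by exact_mod_cast hg
      have hg' : Differentiable ℝ g ∧ ContDiff ℝ n (deriv g) := by
        have := (contDiff_succ_iff_deriv (n := (n : WithTop ℕ∞))).1 hg2
        exact ⟨this.1, this.2.2⟩
      refine step_O hg'.1 ?_ (ih (deriv g) hg'.2 ?_)
      · simpa using hv 0 (Nat.succ_pos n)
      · intro k hk
        have := hv (k + 1) (by omega)
        rwa [iteratedDeriv_succ'] at this

lemma itd_sum {ι : Type*} (s : Finset ι) (f : ι → ℝ → ℝ) (n : ℕ) (x : ℝ)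
    (hf : ∀ i ∈ s, ContDiff ℝ n (f i)) :
    iteratedDeriv n (fun h => ∑ i ∈ s, f i h) x = ∑ i ∈ s, iteratedDeriv n (f i) x := by
  induction s using Finset.cons_induction with
  | empty => simp [iteratedDeriv, iteratedFDeriv_zero_fun]
  | cons a s ha ih =>
      simp only [Finset.sum_cons]
      have h1 : iteratedDeriv n (fun h => f a h + ∑ i ∈ s, f i h) x
          = iteratedDeriv n (f a) x + iteratedDeriv n (fun h => ∑ i ∈ s, f i h) x := by
        have := iteratedDerivWithin_add (Set.mem_univ x) uniqueDiffOn_univ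
          (f := f a) (g := fun h => ∑ i ∈ s, f i h) (n := n)
          ((hf a (Finset.mem_cons_self a s)).contDiffWithinAt)
          ((ContDiff.sum (fun i hi => hf i (Finset.mem_cons_of_mem hi))).contDiffWithinAt)
        simpa [iteratedDerivWithin_univ, Pi.add_def] using this
      rw [h1, ih (fun i hi => hf i (Finset.mem_cons_of_mem hi))]

lemma itd_sub (f g : ℝ → ℝ) (n : ℕ) (x : ℝ) (hf : ContDiff ℝ n f) (hg : ContDiff ℝ n g) :
    iteratedDeriv n (fun h => f h - g h) x = iteratedDeriv n f x - iteratedDeriv n g x := by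
  have := iteratedDerivWithin_sub (Set.mem_univ x) uniqueDiffOn_univ
    hf.contDiffWithinAt hg.contDiffWithinAt
  simpa [iteratedDerivWithin_univ, Pi.sub_def] using this

lemma line_iteratedDeriv (F : ℝ × ℝ → ℝ) (hF : ContDiff ℝ 6 F) (a v : ℝ × ℝ) :
    ∀ n : ℕ, n ≤ 6 →
      iteratedDeriv n (fun h : ℝ => F (a + h • v))
        = fun h => iteratedFDeriv ℝ n F (a + h • v) (fun _ => v) := by
  intro n
  induction n with
  | zero => intro _; funext h; simp [iteratedDeriv_zero, iteratedFDeriv_zero_apply]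
  | succ n ih =>
      intro hn
      rw [iteratedDeriv_succ, ih (by omega)]
      funext h
      have hc : HasDerivAt (fun h : ℝ => a + h • v) v h := by
        simpa using ((hasDerivAt_id h).smul_const v).const_add a
      have hGd : DifferentiableAt ℝ (iteratedFDeriv ℝ n F) (a + h • v) :=
        (hF.differentiable_iteratedFDeriv (by exact_mod_cast (by norm_num; omega :
          (n:ℕ∞) < 6))).differentiableAt
      have h1 : HasDerivAt (fun h : ℝ => iteratedFDeriv ℝ n F (a + h • v))
          (fderiv ℝ (iteratedFDeriv ℝ n F) (a + h • v) v) h :=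
        hGd.hasFDerivAt.comp_hasDerivAt h hc
      have h2 := (ContinuousMultilinearMap.apply ℝ (fun _ : Fin n => ℝ × ℝ) ℝ
        (fun _ => v)).hasFDerivAt.comp_hasDerivAt h h1
      have h3 : HasDerivAt (fun h : ℝ => iteratedFDeriv ℝ n F (a + h • v) (fun _ => v))
          (iteratedFDeriv ℝ (n+1) F (a + h • v) (fun _ => v)) h := by
        rw [iteratedFDeriv_succ_apply_left]
        exact h2
      exact h3.deriv
/-- The centrally symmetric 5×5 stencil with six parameters. -/
def stencil (w0 w1 w2 w3 w4 w5 : ℝ) (p q : ℤ) : ℝ :=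
  if p = 0 ∧ q = 0 then w0
  else if (|p| = 1 ∧ q = 0) ∨ (p = 0 ∧ |q| = 1) then w1
  else if |p| = 1 ∧ |q| = 1 then w2
  else if (|p| = 2 ∧ q = 0) ∨ (p = 0 ∧ |q| = 2) then w3
  else if (|p| = 1 ∧ |q| = 2) ∨ (|p| = 2 ∧ |q| = 1) then w4
  else w5

lemma moment (w0 w1 w2 w3 w4 w5 : ℝ)
    (hcons : w0 + 4*w1 + 4*w2 + 4*w3 + 8*w4 + 4*w5 = 0)
    (hord2 : w1 + 2*w2 + 4*w3 + 10*w4 + 8*w5 = 1)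
    (hord4a : w2 + 8*w4 + 16*w5 = 0)
    (hord4b : (1/12)*w1 + (1/6)*w2 + (4/3)*w3 + (17/6)*w4 + (8/3)*w5 = 0)
    (k l : ℕ) (hkl : k + l ≤ 5) :
    ∑ p ∈ Finset.Icc (-2 : ℤ) 2, ∑ q ∈ Finset.Icc (-2 : ℤ) 2,
      stencil w0 w1 w2 w3 w4 w5 p q * (p:ℝ)^k * (q:ℝ)^l
      = if (k = 2 ∧ l = 0) ∨ (k = 0 ∧ l = 2) then 2 else 0 := by
  have hIcc : Finset.Icc (-2 : ℤ) 2 = {-2,-1,0,1,2} := by decide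
  simp only [hIcc]
  have hk : k ≤ 5 := by omega
  have hl : l ≤ 5 := by omega
  interval_cases k <;> interval_cases l <;>
    first
      | (exfalso; omega)
      | ((norm_num [stencil, Finset.sum_insert, Finset.mem_insert]) <;> linarith)

noncomputable def e2 : Fin 2 → ℝ × ℝ := ![(1,0),(0,1)]

lemma expand_multilinear (n : ℕ) (m : ContinuousMultilinearMap ℝ (fun _ : Fin n => ℝ × ℝ) ℝ)
    (p q : ℝ) :
    m (fun _ => (p, q)) = ∑ s : Fin n → Fin 2,
      (p ^ (Finset.univ.filter (fun i => s i = 0)).card *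
       q ^ (Finset.univ.filter (fun i => ¬ s i = 0)).card) * m (fun i => e2 (s i)) := by
  have hv : (fun _ : Fin n => (p, q)) = fun _ : Fin n => ∑ j : Fin 2, (![p,q] j) • e2 j := by
    funext i
    simp [e2, Fin.sum_univ_two, Prod.ext_iff]
  rw [hv, m.map_sum]
  refine Finset.sum_congr rfl fun s _ => ?_
  rw [show (fun i => (![p,q] (s i)) • e2 (s i)) = fun i => (![p,q] (s i)) • (fun j => e2 (s j)) i
      from rfl, m.map_smul_univ]
  rw [smul_eq_mul]
  congr 1
  rw [← Finset.prod_filter_mul_prod_filter_not Finset.univ (fun i => s i = 0)]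
  congr 1
  · rw [Finset.prod_congr rfl (fun i hi => ?_), Finset.prod_const]
    rw [Finset.mem_filter] at hi
    rw [hi.2]
    rfl
  · rw [Finset.prod_congr rfl (fun i hi => ?_), Finset.prod_const]
    rw [Finset.mem_filter] at hi
    have h1 : s i = 1 := by
      have := hi.2
      omega
    rw [h1]
    rfl
/-- iterated derivative of `h ↦ h^2 * c` at `0`. -/
lemma itd_sq (c : ℝ) (n : ℕ) :
    iteratedDeriv n (fun h : ℝ => h ^ 2 * c) 0 = if n = 2 then 2 * c else 0 := by
  have d1 : deriv (fun h : ℝ => h ^ 2 * c) = fun h => 2 * h * c := by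
    funext t
    have := (hasDerivAt_pow 2 t).mul_const c
    simpa using this.deriv
  have d2 : deriv (fun h : ℝ => 2 * h * c) = fun _ => 2 * c := by
    funext t
    have := ((hasDerivAt_id t).const_mul 2).mul_const c
    simpa using this.deriv
  have d3 : deriv (fun _ : ℝ => 2 * c) = fun _ : ℝ => (0:ℝ) := by
    funext t; simp
  match n with
  | 0 => simp
  | 1 => simp [iteratedDeriv_one, d1]
  | 2 => rw [iteratedDeriv_succ', iteratedDeriv_succ', d1, d2]; simp
  | (k+3) =>
      rw [iteratedDeriv_succ', iteratedDeriv_succ', iteratedDeriv_succ', d1, d2, d3]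
      simp [iteratedDeriv, iteratedFDeriv_zero_fun]

lemma itd_cmul (c : ℝ) (f : ℝ → ℝ) (n : ℕ) (x : ℝ) (hf : ContDiff ℝ n f) :
    iteratedDeriv n (fun h => c * f h) x = c * iteratedDeriv n f x := by
  have := iteratedDerivWithin_const_mul (Set.mem_univ x) uniqueDiffOn_univ c hf.contDiffWithinAt
  simpa [iteratedDerivWithin_univ] using this

section partials
variable (u : ℝ → ℝ → ℝ) (hu : ContDiff ℝ 6 (fun p : ℝ × ℝ => u p.1 p.2)) (x y : ℝ)

lemma partial_xx (u : ℝ → ℝ → ℝ) (hu : ContDiff ℝ 6 (fun p : ℝ × ℝ => u p.1 p.2)) (x y : ℝ) :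
    deriv (deriv (fun s => u s y)) x
      = fderiv ℝ (fderiv ℝ (fun p : ℝ × ℝ => u p.1 p.2)) (x, y) (1, 0) (1, 0) := by
  set F : ℝ × ℝ → ℝ := fun p => u p.1 p.2 with hF
  have hdF : Differentiable ℝ F := hu.differentiable (by norm_num)
  have hF' : ContDiff ℝ 5 (fderiv ℝ F) := hu.fderiv_right (by norm_num)
  have step1 : deriv (fun s => u s y) = fun s => fderiv ℝ F (s, y) (1, 0) := by
    funext s
    have hι : HasDerivAt (fun s : ℝ => (s, y)) ((1:ℝ), (0:ℝ)) s :=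
      (hasDerivAt_id s).prodMk (hasDerivAt_const s y)
    exact ((hdF (s, y)).hasFDerivAt.comp_hasDerivAt s hι).deriv
  rw [step1]
  have hι : HasDerivAt (fun s : ℝ => (s, y)) ((1:ℝ), (0:ℝ)) x :=
    (hasDerivAt_id x).prodMk (hasDerivAt_const x y)
  have h1 : HasDerivAt (fun s : ℝ => fderiv ℝ F (s, y))
      (fderiv ℝ (fderiv ℝ F) (x, y) (1, 0)) x :=
    ((hF'.differentiable (by norm_num) (x, y)).hasFDerivAt).comp_hasDerivAt x hι
  have h2 := ((ContinuousLinearMap.apply ℝ ℝ ((1:ℝ), (0:ℝ))).hasFDerivAt).comp_hasDerivAt x h1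
  exact h2.deriv

lemma partial_yy (u : ℝ → ℝ → ℝ) (hu : ContDiff ℝ 6 (fun p : ℝ × ℝ => u p.1 p.2)) (x y : ℝ) :
    deriv (deriv (fun s => u x s)) y
      = fderiv ℝ (fderiv ℝ (fun p : ℝ × ℝ => u p.1 p.2)) (x, y) (0, 1) (0, 1) := by
  set F : ℝ × ℝ → ℝ := fun p => u p.1 p.2 with hF
  have hdF : Differentiable ℝ F := hu.differentiable (by norm_num)
  have hF' : ContDiff ℝ 5 (fderiv ℝ F) := hu.fderiv_right (by norm_num)
  have step1 : deriv (fun s => u x s) = fun s => fderiv ℝ F (x, s) (0, 1) := by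
    funext s
    have hι : HasDerivAt (fun s : ℝ => (x, s)) ((0:ℝ), (1:ℝ)) s :=
      (hasDerivAt_const s x).prodMk (hasDerivAt_id s)
    exact ((hdF (x, s)).hasFDerivAt.comp_hasDerivAt s hι).deriv
  rw [step1]
  have hι : HasDerivAt (fun s : ℝ => (x, s)) ((0:ℝ), (1:ℝ)) y :=
    (hasDerivAt_const y x).prodMk (hasDerivAt_id y)
  have h1 : HasDerivAt (fun s : ℝ => fderiv ℝ F (x, s))
      (fderiv ℝ (fderiv ℝ F) (x, y) (0, 1)) y :=
    ((hF'.differentiable (by norm_num) (x, y)).hasFDerivAt).comp_hasDerivAt y hι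
  have h2 := ((ContinuousLinearMap.apply ℝ ℝ ((0:ℝ), (1:ℝ))).hasFDerivAt).comp_hasDerivAt y h1
  exact h2.deriv
end partials
lemma stencil_sum (w0 w1 w2 w3 w4 w5 : ℝ)
    (hcons : w0 + 4*w1 + 4*w2 + 4*w3 + 8*w4 + 4*w5 = 0)
    (hord2 : w1 + 2*w2 + 4*w3 + 10*w4 + 8*w5 = 1)
    (hord4a : w2 + 8*w4 + 16*w5 = 0)
    (hord4b : (1/12)*w1 + (1/6)*w2 + (4/3)*w3 + (17/6)*w4 + (8/3)*w5 = 0)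
    (n : ℕ) (hn : n ≤ 5) (m : ContinuousMultilinearMap ℝ (fun _ : Fin n => ℝ × ℝ) ℝ) :
    ∑ p ∈ Finset.Icc (-2 : ℤ) 2, ∑ q ∈ Finset.Icc (-2 : ℤ) 2,
      stencil w0 w1 w2 w3 w4 w5 p q * m (fun _ => ((p:ℝ), (q:ℝ)))
      = if n = 2 then 2 * (m (fun _ => e2 0) + m (fun _ => e2 1)) else 0 := by
  classical
  set K := stencil w0 w1 w2 w3 w4 w5 with hK
  set kk : (Fin n → Fin 2) → ℕ := fun s => (Finset.univ.filter (fun i => s i = 0)).card with hkk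
  set ll : (Fin n → Fin 2) → ℕ := fun s => (Finset.univ.filter (fun i => ¬ s i = 0)).card with hll
  have hkl : ∀ s, kk s + ll s = n := by
    intro s
    simpa using Finset.card_filter_add_card_filter_not (s := Finset.univ)
      (p := fun i => s i = 0)
  have step1 : ∀ p q : ℤ, K p q * m (fun _ => ((p:ℝ), (q:ℝ)))
      = ∑ s : Fin n → Fin 2, (K p q * (p:ℝ)^(kk s) * (q:ℝ)^(ll s)) * m (fun i => e2 (s i)) := by
    intro p q
    rw [expand_multilinear n m]
    rw [Finset.mul_sum]
    exact Finset.sum_congr rfl fun s _ => by ring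
  calc ∑ p ∈ Finset.Icc (-2 : ℤ) 2, ∑ q ∈ Finset.Icc (-2 : ℤ) 2,
        K p q * m (fun _ => ((p:ℝ), (q:ℝ)))
      = ∑ s : Fin n → Fin 2, (∑ p ∈ Finset.Icc (-2 : ℤ) 2, ∑ q ∈ Finset.Icc (-2 : ℤ) 2,
          K p q * (p:ℝ)^(kk s) * (q:ℝ)^(ll s)) * m (fun i => e2 (s i)) := by
        simp_rw [step1]
        rw [Finset.sum_congr rfl fun p _ => Finset.sum_comm, Finset.sum_comm]
        refine Finset.sum_congr rfl fun s _ => ?_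
        simp_rw [Finset.sum_mul]
    _ = ∑ s : Fin n → Fin 2,
          (if (kk s = 2 ∧ ll s = 0) ∨ (kk s = 0 ∧ ll s = 2) then (2:ℝ) else 0)
            * m (fun i => e2 (s i)) := by
        refine Finset.sum_congr rfl fun s _ => ?_
        rw [moment w0 w1 w2 w3 w4 w5 hcons hord2 hord4a hord4b (kk s) (ll s)
          (by rw [hkl s]; exact hn)]
    _ = if n = 2 then 2 * (m (fun _ => e2 0) + m (fun _ => e2 1)) else 0 := by
        by_cases h2 : n = 2
        · subst h2
          simp only [if_true]
          rw [← Equiv.sum_comp (piFinTwoEquiv (fun _ : Fin 2 => Fin 2)).symm]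
          rw [Fintype.sum_prod_type]
          simp only [Fin.sum_univ_two]
          have hfun : ∀ i j : Fin 2,
              (fun k => e2 ((piFinTwoEquiv (fun _ : Fin 2 => Fin 2)).symm (i, j) k))
                = (fun k : Fin 2 => e2 (![i, j] k)) := fun i j => rfl
          simp only [hfun]
          have c1 : (fun k : Fin 2 => e2 (![(0:Fin 2), 0] k)) = fun _ => e2 0 := by
            funext k; fin_cases k <;> rfl
          have c2 : (fun k : Fin 2 => e2 (![(1:Fin 2), 1] k)) = fun _ => e2 1 := by
            funext k; fin_cases k <;> rfl
          have d1 : kk ((piFinTwoEquiv (fun _ : Fin 2 => Fin 2)).symm (0, 0)) = 2 := by decide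
          have d2 : ll ((piFinTwoEquiv (fun _ : Fin 2 => Fin 2)).symm (0, 0)) = 0 := by decide
          have d3 : kk ((piFinTwoEquiv (fun _ : Fin 2 => Fin 2)).symm (0, 1)) = 1 := by decide
          have d4 : ll ((piFinTwoEquiv (fun _ : Fin 2 => Fin 2)).symm (0, 1)) = 1 := by decide
          have d5 : kk ((piFinTwoEquiv (fun _ : Fin 2 => Fin 2)).symm (1, 0)) = 1 := by decide
          have d6 : ll ((piFinTwoEquiv (fun _ : Fin 2 => Fin 2)).symm (1, 0)) = 1 := by decide
          have d7 : kk ((piFinTwoEquiv (fun _ : Fin 2 => Fin 2)).symm (1, 1)) = 0 := by decide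
          have d8 : ll ((piFinTwoEquiv (fun _ : Fin 2 => Fin 2)).symm (1, 1)) = 2 := by decide
          rw [d1, d2, d3, d4, d5, d6, d7, d8, c1, c2]
          norm_num
          ring
        · rw [if_neg h2]
          refine Finset.sum_eq_zero fun s _ => ?_
          rw [if_neg, zero_mul]
          rintro (⟨h1, h1'⟩ | ⟨h1, h1'⟩) <;> (have := hkl s; omega)
theorem stmt_6 (w0 w1 w2 w3 w4 w5 : ℝ)
    (hcons : w0 + 4*w1 + 4*w2 + 4*w3 + 8*w4 + 4*w5 = 0)
    (hord2 : w1 + 2*w2 + 4*w3 + 10*w4 + 8*w5 = 1)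
    (hord4a : w2 + 8*w4 + 16*w5 = 0)
    (hord4b : (1/12)*w1 + (1/6)*w2 + (4/3)*w3 + (17/6)*w4 + (8/3)*w5 = 0)
    (u : ℝ → ℝ → ℝ) (hu : ContDiff ℝ 6 (fun p : ℝ × ℝ => u p.1 p.2))
    (x y : ℝ) :
    (fun h : ℝ =>
        (1 / h^2) * ∑ p ∈ Finset.Icc (-2 : ℤ) 2, ∑ q ∈ Finset.Icc (-2 : ℤ) 2,
            stencil w0 w1 w2 w3 w4 w5 p q * u (x + p * h) (y + q * h)
          - (deriv (deriv (fun s => u s y)) x + deriv (deriv (fun s => u x s)) y))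
      =O[nhdsWithin 0 {0}ᶜ] (fun h : ℝ => h^4) := by
  classical
  set F : ℝ × ℝ → ℝ := fun p => u p.1 p.2 with hFdef
  set Δ : ℝ := deriv (deriv (fun s => u s y)) x + deriv (deriv (fun s => u x s)) y with hΔ
  set K : ℤ → ℤ → ℝ := stencil w0 w1 w2 w3 w4 w5 with hKdef
  set I : Finset ℤ := Finset.Icc (-2) 2 with hI
  set g : ℝ → ℝ := fun h =>
    (∑ p ∈ I, ∑ q ∈ I, K p q * F ((x, y) + h • ((p:ℝ), (q:ℝ)))) - h ^ 2 * Δ with hgdef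
  have hterm : ∀ (p q : ℤ), ContDiff ℝ 6 (fun h : ℝ => K p q * F ((x,y) + h • ((p:ℝ),(q:ℝ)))) :=
    fun p q => contDiff_const.mul
      (hu.comp (contDiff_const.add (contDiff_id.smul contDiff_const)))
  have hinner : ∀ p : ℤ, ContDiff ℝ 6
      (fun h : ℝ => ∑ q ∈ I, K p q * F ((x,y) + h • ((p:ℝ),(q:ℝ)))) :=
    fun p => ContDiff.sum fun q _ => hterm p q
  have hsum : ContDiff ℝ 6
      (fun h : ℝ => ∑ p ∈ I, ∑ q ∈ I, K p q * F ((x,y) + h • ((p:ℝ),(q:ℝ)))) :=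
    ContDiff.sum fun p _ => hinner p
  have hsq : ContDiff ℝ 6 (fun h : ℝ => h ^ 2 * Δ) := (contDiff_id.pow 2).mul contDiff_const
  have hg6 : ContDiff ℝ 6 g := hsum.sub hsq
  have hcast : ∀ k : ℕ, k ≤ 6 → ((k : WithTop ℕ∞) ≤ 6) := by
    intro k hk
    exact_mod_cast hk
  have hvan : ∀ k < 6, iteratedDeriv k g 0 = 0 := by
    intro k hk
    have hk6 : (k : WithTop ℕ∞) ≤ 6 := hcast k (by omega)
    have e1 : iteratedDeriv k g 0 =
        (∑ p ∈ I, ∑ q ∈ I, K p q * (iteratedFDeriv ℝ k F (x, y) (fun _ => ((p:ℝ), (q:ℝ)))))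
          - (if k = 2 then 2 * Δ else 0) := by
      rw [hgdef]
      rw [itd_sub _ _ k 0 (hsum.of_le hk6) (hsq.of_le hk6)]
      rw [itd_sum I _ k 0 (fun p _ => (hinner p).of_le hk6)]
      rw [itd_sq]
      congr 1
      refine Finset.sum_congr rfl fun p _ => ?_
      rw [itd_sum I _ k 0 (fun q _ => (hterm p q).of_le hk6)]
      refine Finset.sum_congr rfl fun q _ => ?_
      rw [itd_cmul (K p q) (fun h => F ((x,y) + h • ((p:ℝ),(q:ℝ)))) k 0
        (by exact (hu.comp (contDiff_const.add
          (contDiff_id.smul contDiff_const))).of_le hk6)]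
      rw [line_iteratedDeriv F hu (x, y) ((p:ℝ), (q:ℝ)) k (by omega)]
      norm_num
    rw [e1, stencil_sum w0 w1 w2 w3 w4 w5 hcons hord2 hord4a hord4b k (by omega)
      (iteratedFDeriv ℝ k F (x, y))]
    by_cases h2 : k = 2
    · subst h2
      simp only [if_true]
      have hA : iteratedFDeriv ℝ 2 F (x, y) (fun _ => e2 0)
          = fderiv ℝ (fderiv ℝ F) (x, y) (1, 0) (1, 0) := by
        rw [iteratedFDeriv_two_apply]
        rfl
      have hB : iteratedFDeriv ℝ 2 F (x, y) (fun _ => e2 1)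
          = fderiv ℝ (fderiv ℝ F) (x, y) (0, 1) (0, 1) := by
        rw [iteratedFDeriv_two_apply]
        rfl
      rw [hA, hB, hΔ, partial_xx u hu x y, partial_yy u hu x y]
      ring
    · rw [if_neg h2, if_neg h2]
      ring
  have hO6 : g =O[nhds 0] fun h => h ^ 6 := by
    refine vanish_O 6 g ?_ hvan
    exact_mod_cast hg6
  have hO6' : g =O[nhdsWithin 0 {0}ᶜ] fun h => h ^ 6 := hO6.mono nhdsWithin_le_nhds
  have hmul := hO6'.mul (isBigO_refl (fun h : ℝ => (h ^ 2)⁻¹) (nhdsWithin 0 {0}ᶜ))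
  refine hmul.congr' ?_ ?_
  · filter_upwards [self_mem_nhdsWithin] with h hh
    have hne : h ≠ 0 := hh
    have hS : ∑ p ∈ I, ∑ q ∈ I, K p q * u (x + p * h) (y + q * h)
        = ∑ p ∈ I, ∑ q ∈ I, K p q * F ((x, y) + h • ((p:ℝ), (q:ℝ))) := by
      refine Finset.sum_congr rfl fun p _ => Finset.sum_congr rfl fun q _ => ?_
      have : F ((x, y) + h • ((p:ℝ), (q:ℝ))) = u (x + h * p) (y + h * q) := rfl
      rw [this, mul_comm h (p:ℝ), mul_comm h (q:ℝ)]
    simp only [hgdef]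
    rw [hS]
    field_simp
  · filter_upwards [self_mem_nhdsWithin] with h hh
    have hne : h ≠ 0 := hh
    field_simp
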